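/- Let (s_k)_{k≥1} be i.i.d. bounded real-valued random variables with E[s_1] < 0, and suppose there exists r > 0 with E[exp(r·s_1)] = 1. Then for any threshold h > 0 the one-sided CUSUM alarm time satisfies E[T_h] ≥ exp(r·h). -/

import Mathlib

open MeasureTheory ProbabilityTheory
open scoped ENNReal

/-- One-sided CUSUM statistic with step sequence `x` (where `x k` is the `(k+1)`-st
step `s_{k+1}`): `g_0 = 0`, `g_{k+1} = max (0, g_k + s_{k+1})`. -/
def gCusum (x : ℕ → ℝ) : ℕ → ℝ
  | 0 => 0
  | k + 1 => max 0 (gCusum x k + x k)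

/-- One-sided CUSUM alarm time `T_h = inf {k ≥ 1 : g_k ≥ h}`, valued in `ℝ≥0∞`
(`⊤` if the threshold is never reached). -/
noncomputable def oneSidedAlarm (h : ℝ) (x : ℕ → ℝ) : ℝ≥0∞ :=
  sInf ((fun n : ℕ => (n : ℝ≥0∞)) '' {k : ℕ | 1 ≤ k ∧ h ≤ gCusum x k})

/-- Stopped (frozen) CUSUM: freezes once it reaches `h`. -/
noncomputable def gStop (h : ℝ) (x : ℕ → ℝ) : ℕ → ℝ :=
  fun n => Nat.rec 0 (fun k g => if h ≤ g then g else max 0 (g + x k)) n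

@[simp] lemma gStop_zero (h : ℝ) (x : ℕ → ℝ) : gStop h x 0 = 0 := rfl

lemma gStop_succ (h : ℝ) (x : ℕ → ℝ) (n : ℕ) :
    gStop h x (n + 1) = if h ≤ gStop h x n then gStop h x n else max 0 (gStop h x n + x n) := rfl

lemma gStop_nonneg (h : ℝ) (x : ℕ → ℝ) (n : ℕ) : 0 ≤ gStop h x n := by
  induction n with
  | zero => simp
  | succ n ih =>
    by_cases hc : h ≤ gStop h x n <;> simp [gStop_succ, hc, ih, le_max_left]

lemma gStop_le (h B : ℝ) (hh : 0 < h) (x : ℕ → ℝ) (hx : ∀ k, |x k| ≤ B) (n : ℕ) :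
    gStop h x n ≤ h + max B 0 := by
  induction n with
  | zero => simp; positivity
  | succ n ih =>
    by_cases hc : h ≤ gStop h x n
    · simpa [gStop_succ, hc] using ih
    · have hxn : x n ≤ max B 0 := le_trans (le_trans (le_abs_self _) (hx n)) (le_max_left _ _)
      have h1 : gStop h x n + x n ≤ h + max B 0 :=
        add_le_add (le_of_not_ge hc) hxn
      have h2 : (0:ℝ) ≤ h + max B 0 := by positivity
      simp only [gStop_succ, if_neg hc]
      exact max_le h2 h1

lemma gStop_congr (h : ℝ) {x y : ℕ → ℝ} (n : ℕ) (hxy : ∀ k < n, x k = y k) :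
    gStop h x n = gStop h y n := by
  induction n with
  | zero => rfl
  | succ n ih =>
    have h1 : gStop h x n = gStop h y n := ih fun k hk => hxy k (Nat.lt_succ_of_lt hk)
    simp [gStop_succ, h1, hxy n (Nat.lt_succ_self n)]

lemma measurable_gStop (h : ℝ) (n : ℕ) : Measurable (fun x : ℕ → ℝ => gStop h x n) := by
  induction n with
  | zero => simpa using measurable_const
  | succ n ih =>
    simp only [gStop_succ]
    exact Measurable.ite (measurableSet_le measurable_const ih) ih
      (measurable_const.max (ih.add (measurable_pi_apply n)))

lemma gStop_freeze (h : ℝ) (x : ℕ → ℝ) {m n : ℕ} (hmn : m ≤ n)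
    (hm : h ≤ gStop h x m) : h ≤ gStop h x n := by
  induction n, hmn using Nat.le_induction with
  | base => exact hm
  | succ n hmn ih => simp [gStop_succ, ih]

lemma gStop_eq_gCusum (h : ℝ) (x : ℕ → ℝ) {n : ℕ} (hn : gStop h x n < h) :
    gCusum x n = gStop h x n := by
  induction n with
  | zero => rfl
  | succ n ih =>
    by_cases hc : h ≤ gStop h x n
    · exact absurd hn (by simp [gStop_succ, hc, not_lt.2 hc])
    · have ihn := ih (lt_of_not_ge hc)
      simp [gStop_succ, gCusum, hc, ihn]

lemma alarm_lower (h : ℝ) (x : ℕ → ℝ) {n : ℕ} (hn : gStop h x n < h) :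
    ((n : ℝ≥0∞) + 1) ≤ oneSidedAlarm h x := by
  refine le_sInf ?_
  rintro b ⟨k, ⟨-, hk2⟩, rfl⟩
  have hkn : n < k := by
    by_contra hc
    push_neg at hc
    have h1 : gStop h x k < h := by
      by_contra h2
      exact absurd (gStop_freeze h x hc (not_lt.1 h2)) (not_le.2 hn)
    rw [gStop_eq_gCusum h x h1] at hk2
    exact absurd hk2 (not_le.2 h1)
  have : ((n + 1 : ℕ) : ℝ≥0∞) ≤ (k : ℝ≥0∞) := by exact_mod_cast Nat.cast_le.2 hkn
  simpa using this

lemma alarm_infinite (h : ℝ) (x : ℕ → ℝ) (hall : ∀ n, gStop h x n < h) :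
    oneSidedAlarm h x = ⊤ := by
  have : {k : ℕ | 1 ≤ k ∧ h ≤ gCusum x k} = ∅ := by
    ext k
    simp only [Set.mem_setOf_eq, Set.mem_empty_iff_false, iff_false, not_and, not_le]
    intro _
    rw [gStop_eq_gCusum h x (hall k)]
    exact hall k
  simp [oneSidedAlarm, this]

/-- **One-sided average-run-length lower bound** (from the proof of Proposition 1).
If the i.i.d. bounded steps have negative mean drift `E[s_1] < 0` and `r > 0` is the
nonzero root of the cumulant generating function (`E[exp (r s_1)] = 1`), then for any
threshold `h > 0` the one-sided CUSUM alarm time satisfies `E[T_h] ≥ exp (r h)`. -/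
theorem one_sided_cusum_arl_lower_bound
    {Ω : Type*} [MeasurableSpace Ω] {μ : Measure Ω} [IsProbabilityMeasure μ]
    (s : ℕ → Ω → ℝ) (hmeas : ∀ k, Measurable (s k))
    (hindep : iIndepFun s μ)
    (hident : ∀ k, IdentDistrib (s k) (s 0) μ μ)
    (B : ℝ) (hbdd : ∀ k, ∀ᵐ ω ∂μ, |s k ω| ≤ B)
    (hmean : ∫ ω, s 0 ω ∂μ < 0)
    (r : ℝ) (hr : 0 < r) (hroot : ∫ ω, Real.exp (r * s 0 ω) ∂μ = 1)
    (h : ℝ) (hh : 0 < h) :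
    ENNReal.ofReal (Real.exp (r * h)) ≤ ∫⁻ ω, oneSidedAlarm h (fun k => s k ω) ∂μ := by
  classical
  have hxmeas : Measurable fun ω => (fun k => s k ω) := measurable_pi_lambda _ hmeas
  set GS : ℕ → Ω → ℝ := fun n ω => gStop h (fun k => s k ω) n with hGS
  have hGSmeas : ∀ n, Measurable (GS n) := fun n => (measurable_gStop h n).comp hxmeas
  have hGSnn : ∀ n ω, 0 ≤ GS n ω := fun n ω => gStop_nonneg h _ n
  set A : ℕ → Set Ω := fun n => {ω | h ≤ GS n ω} with hA
  have hAmeas : ∀ n, MeasurableSet (A n) := fun n =>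
    measurableSet_le measurable_const (hGSmeas n)
  have hAmono : Monotone A := by
    intro m n hmn ω hω
    exact gStop_freeze h _ hmn hω
  have hAc : ∀ n, (A n)ᶜ = {ω | GS n ω < h} := by
    intro n; ext ω; simp [hA, not_le]
  set p : ℕ → ℝ := fun n => (μ (A n)).toReal with hp
  set q : ℕ → ℝ := fun n => (μ (A n)ᶜ).toReal with hq
  have hpq : ∀ n, p n + q n = 1 := by
    intro n
    have := measure_add_measure_compl (μ := μ) (hAmeas n)
    have h1 : μ (A n) ≠ ⊤ := measure_ne_top _ _
    have h2 : μ (A n)ᶜ ≠ ⊤ := measure_ne_top _ _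
    rw [hp, hq, ← ENNReal.toReal_add h1 h2, this]
    simp
  -- processes
  set M : ℕ → Ω → ℝ := fun n ω => Real.exp (r * GS n ω) with hM
  set Φ : ℕ → Ω → ℝ := fun n ω => if GS n ω < h then Real.exp (r * GS n ω) else 0 with hΦ
  set c : ℕ → Ω → ℝ := fun n ω =>
    if GS n ω < h ∧ GS n ω + s n ω ≤ 0 then 1 else 0 with hc
  set ξ : ℕ → Ω → ℝ := fun n ω => Real.exp (r * s n ω) - 1 with hξ
  have hMmeas : ∀ n, Measurable (M n) := fun n =>
    (Real.measurable_exp.comp (measurable_const.mul (hGSmeas n)))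
  have hΦmeas : ∀ n, Measurable (Φ n) := by
    intro n
    exact Measurable.ite (measurableSet_lt (hGSmeas n) measurable_const)
      (Real.measurable_exp.comp (measurable_const.mul (hGSmeas n))) measurable_const
  have hcmeas : ∀ n, Measurable (c n) := by
    intro n
    refine Measurable.ite ?_ measurable_const measurable_const
    exact (measurableSet_lt (hGSmeas n) measurable_const).inter
      (measurableSet_le ((hGSmeas n).add (hmeas n)) measurable_const)
  have hξmeas : ∀ n, Measurable (ξ n) :=
    fun n => (Real.measurable_exp.comp (measurable_const.mul (hmeas n))).sub measurable_const
  -- integrability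
  set B' : ℝ := max B 0 with hB'
  have hMbd : ∀ n, ∀ᵐ ω ∂μ, ‖M n ω‖ ≤ Real.exp (r * (h + B')) := by
    intro n
    filter_upwards [ae_all_iff.2 hbdd] with ω hω
    have h1 : GS n ω ≤ h + B' := gStop_le h B hh _ (fun k => hω k) n
    rw [Real.norm_eq_abs, abs_of_pos (Real.exp_pos _)]
    exact Real.exp_le_exp.2 (by nlinarith [hr.le])
  have hMint : ∀ n, Integrable (M n) μ := by
    intro n
    exact (integrable_const (Real.exp (r * (h + B')))).mono'
      (hMmeas n).aestronglyMeasurable (hMbd n)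
  have hΦbd : ∀ n ω, ‖Φ n ω‖ ≤ Real.exp (r * h) := by
    intro n ω
    rw [hΦ]
    by_cases hlt : GS n ω < h
    · simp only [if_pos hlt, Real.norm_eq_abs, abs_of_pos (Real.exp_pos _)]
      exact Real.exp_le_exp.2 (by nlinarith)
    · simp [if_neg hlt, (Real.exp_pos (r*h)).le]
  have hΦint : ∀ n, Integrable (Φ n) μ := by
    intro n
    exact (integrable_const (Real.exp (r * h))).mono'
      (hΦmeas n).aestronglyMeasurable (Filter.Eventually.of_forall (hΦbd n))
  have hcint : ∀ n, Integrable (c n) μ := by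
    intro n
    refine (integrable_const (1:ℝ)).mono' (hcmeas n).aestronglyMeasurable ?_
    refine Filter.Eventually.of_forall fun ω => ?_
    simp only [hc]; split <;> simp
  have hexpint : ∀ k, Integrable (fun ω => Real.exp (r * s k ω)) μ := by
    intro k
    refine (integrable_const (Real.exp (r * B'))).mono'
      (Real.measurable_exp.comp (measurable_const.mul (hmeas k))).aestronglyMeasurable ?_
    filter_upwards [hbdd k] with ω hω
    rw [Real.norm_eq_abs, abs_of_pos (Real.exp_pos _)]
    have : s k ω ≤ B' := le_trans (le_trans (le_abs_self _) hω) (le_max_left _ _)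
    exact Real.exp_le_exp.2 (by nlinarith)
  have hξint : ∀ n, Integrable (ξ n) μ := fun n => (hexpint n).sub (integrable_const 1)
  have hDint : ∀ n, Integrable (fun ω => Φ n ω * ξ n ω) μ := by
    intro n
    exact (hξint n).bdd_mul (hΦmeas n).aestronglyMeasurable (Filter.Eventually.of_forall (hΦbd n))
  -- the exponential has mean 1 at every index
  have hexp1 : ∀ k, ∫ ω, Real.exp (r * s k ω) ∂μ = 1 := by
    intro k
    have hu : Measurable fun t : ℝ => Real.exp (r * t) :=
      Real.measurable_exp.comp (measurable_const.mul measurable_id)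
    have hid := ((hident k).comp hu).integral_eq
    calc ∫ ω, Real.exp (r * s k ω) ∂μ
        = ∫ ω, ((fun t : ℝ => Real.exp (r * t)) ∘ s k) ω ∂μ := rfl
      _ = ∫ ω, ((fun t : ℝ => Real.exp (r * t)) ∘ s 0) ω ∂μ := hid
      _ = 1 := hroot
  have hξzero : ∀ n, ∫ ω, ξ n ω ∂μ = 0 := by
    intro n
    have : ∫ ω, ξ n ω ∂μ = ∫ ω, (Real.exp (r * s n ω) - 1) ∂μ := rfl
    rw [this, integral_sub (hexpint n) (integrable_const 1), hexp1 n]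
    simp
  -- independence of Φ n and ξ n
  have hindepΦξ : ∀ n, IndepFun (Φ n) (ξ n) μ := by
    intro n
    have hdisj : Disjoint (Finset.range n) ({n} : Finset ℕ) := by
      simp only [Finset.disjoint_left, Finset.mem_range, Finset.mem_singleton]
      omega
    have base := hindep.indepFun_finset (Finset.range n) {n} hdisj hmeas
    set F : (↥(Finset.range n) → ℝ) → ℝ := fun v =>
      (fun t : ℝ => if t < h then Real.exp (r * t) else 0)
        (gStop h (fun k => if hk : k ∈ Finset.range n then v ⟨k, hk⟩ else 0) n) with hF
    set G : (↥({n} : Finset ℕ) → ℝ) → ℝ := fun v =>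
      Real.exp (r * v ⟨n, Finset.mem_singleton_self n⟩) - 1 with hG
    have hext : Measurable fun (v : (↥(Finset.range n) → ℝ)) (k : ℕ) =>
        if hk : k ∈ Finset.range n then v ⟨k, hk⟩ else 0 := by
      refine measurable_pi_lambda _ fun k => ?_
      by_cases hk : k ∈ Finset.range n
      · simpa [hk] using measurable_pi_apply (⟨k, hk⟩ : ↥(Finset.range n))
      · simpa [hk] using measurable_const
    have houter : Measurable fun t : ℝ => if t < h then Real.exp (r * t) else 0 :=
      Measurable.ite (measurableSet_lt measurable_id measurable_const)
        (Real.measurable_exp.comp (measurable_const.mul measurable_id)) measurable_const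
    have hFmeas : Measurable F := houter.comp ((measurable_gStop h n).comp hext)
    have hGmeas : Measurable G :=
      (Real.measurable_exp.comp (measurable_const.mul (measurable_pi_apply _))).sub
        measurable_const
    have hcomp := base.comp hFmeas hGmeas
    have hΦeq : Φ n = F ∘ (fun ω (i : ↥(Finset.range n)) => s i ω) := by
      funext ω
      have hcg : gStop h (fun k => if hk : k ∈ Finset.range n then s k ω else 0) n
          = gStop h (fun k => s k ω) n := by
        refine gStop_congr h n fun k hk => ?_
        simp [Finset.mem_range.mpr hk]
      show Φ n ω = (fun t : ℝ => if t < h then Real.exp (r * t) else 0)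
        (gStop h (fun k => if hk : k ∈ Finset.range n then s k ω else 0) n)
      rw [hcg]
    have hξeq : ξ n = G ∘ (fun ω (i : ↥({n} : Finset ℕ)) => s i ω) := rfl
    rw [hΦeq, hξeq]
    exact hcomp
  have hDzero : ∀ n, ∫ ω, Φ n ω * ξ n ω ∂μ = 0 := by
    intro n
    have e : ∫ ω, (Φ n * ξ n) ω ∂μ = (∫ ω, Φ n ω ∂μ) * ∫ ω, ξ n ω ∂μ :=
      (hindepΦξ n).integral_mul_eq_mul_integral (hΦint n).1 (hξint n).1
    calc ∫ ω, Φ n ω * ξ n ω ∂μ = ∫ ω, (Φ n * ξ n) ω ∂μ := rfl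
      _ = (∫ ω, Φ n ω ∂μ) * ∫ ω, ξ n ω ∂μ := e
      _ = 0 := by rw [hξzero n]; ring
  -- key pointwise inequality
  have hGSsucc : ∀ n ω, GS (n+1) ω =
      if h ≤ GS n ω then GS n ω else max 0 (GS n ω + s n ω) := by
    intro n ω; rw [hGS]; exact gStop_succ h _ n
  have hkey : ∀ n ω, M (n+1) ω ≤ M n ω + c n ω + Φ n ω * ξ n ω := by
    intro n ω
    by_cases hc1 : h ≤ GS n ω
    · have he : GS (n+1) ω = GS n ω := by rw [hGSsucc n ω, if_pos hc1]
      simp [hM, hc, hΦ, he, not_lt.2 hc1]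
    · have hlt : GS n ω < h := lt_of_not_ge hc1
      have he : GS (n+1) ω = max 0 (GS n ω + s n ω) := by
        rw [hGSsucc n ω, if_neg hc1]
      have hΦval : Φ n ω = Real.exp (r * GS n ω) := by simp only [hΦ]; simp [hlt]
      have hrhs : M n ω + c n ω + Φ n ω * ξ n ω
          = c n ω + Real.exp (r * (GS n ω + s n ω)) := by
        simp only [hM, hξ]
        rw [hΦval, mul_add, Real.exp_add]
        ring
      rw [hrhs]
      by_cases hc2 : GS n ω + s n ω ≤ 0
      · have hcval : c n ω = 1 := by simp only [hc]; simp [hlt, hc2]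
        have hmv : max 0 (GS n ω + s n ω) = 0 := max_eq_left hc2
        simp only [hM]
        rw [he, hmv, hcval]
        simp only [mul_zero, Real.exp_zero]
        linarith [Real.exp_pos (r * (GS n ω + s n ω))]
      · have hcval : c n ω = 0 := by simp only [hc]; simp [hc2]
        have hmv : max 0 (GS n ω + s n ω) = GS n ω + s n ω :=
          max_eq_right (le_of_not_ge hc2)
        simp only [hM]
        rw [he, hmv, hcval, zero_add]
    -- done
  -- integral recursion
  have hM0 : ∫ ω, M 0 ω ∂μ = 1 := by
    simp [hM, hGS]
  have hstep : ∀ n, ∫ ω, M (n+1) ω ∂μ ≤ ∫ ω, M n ω ∂μ + ∫ ω, c n ω ∂μ := by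
    intro n
    have h1 : ∫ ω, M (n+1) ω ∂μ ≤ ∫ ω, (M n ω + c n ω + Φ n ω * ξ n ω) ∂μ := by
      refine integral_mono (hMint (n+1)) ?_ (hkey n)
      exact ((hMint n).add (hcint n)).add (hDint n)
    have e1 : ∫ ω, (M n ω + c n ω + Φ n ω * ξ n ω) ∂μ
        = ∫ ω, (M n ω + c n ω) ∂μ + ∫ ω, (Φ n ω * ξ n ω) ∂μ :=
      integral_add ((hMint n).add (hcint n)) (hDint n)
    have e2 : ∫ ω, (M n ω + c n ω) ∂μ = ∫ ω, M n ω ∂μ + ∫ ω, c n ω ∂μ :=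
      integral_add (hMint n) (hcint n)
    have e3 := hDzero n
    linarith
  have hMsum : ∀ n, ∫ ω, M n ω ∂μ ≤ 1 + ∑ k ∈ Finset.range n, ∫ ω, c k ω ∂μ := by
    intro n
    induction n with
    | zero => simp [hM0]
    | succ n ih =>
      calc ∫ ω, M (n+1) ω ∂μ ≤ ∫ ω, M n ω ∂μ + ∫ ω, c n ω ∂μ := hstep n
        _ ≤ 1 + ∑ k ∈ Finset.range n, ∫ ω, c k ω ∂μ + ∫ ω, c n ω ∂μ := by linarith
        _ = 1 + ∑ k ∈ Finset.range (n+1), ∫ ω, c k ω ∂μ := by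
            rw [Finset.sum_range_succ]; ring
  -- counting inequality (pointwise)
  have hcount : ∀ n ω, ∑ k ∈ Finset.range n, c k ω ≤
      (∑ k ∈ Finset.range n, (if GS k ω < h then (1:ℝ) else 0))
        - (if h ≤ GS n ω then (1:ℝ) else 0) := by
    intro n ω
    induction n with
    | zero =>
      have h0 : GS 0 ω = 0 := rfl
      simp [h0, not_le.2 hh]
    | succ n ih =>
      rw [Finset.sum_range_succ, Finset.sum_range_succ]
      by_cases hc1 : h ≤ GS n ω
      · have he : GS (n+1) ω = GS n ω := by rw [hGSsucc n ω, if_pos hc1]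
        have hcval : c n ω = 0 := by simp only [hc]; simp [not_lt.2 hc1]
        rw [if_pos hc1] at ih
        rw [hcval, he, if_neg (not_lt.2 hc1), if_pos hc1]
        linarith
      · have hlt : GS n ω < h := lt_of_not_ge hc1
        rw [if_neg hc1] at ih
        have he : GS (n+1) ω = max 0 (GS n ω + s n ω) := by
          rw [hGSsucc n ω, if_neg hc1]
        by_cases hc2 : GS n ω + s n ω ≤ 0
        · have hcval : c n ω = 1 := by simp only [hc]; simp [hlt, hc2]
          have he0 : GS (n+1) ω = 0 := by rw [he]; exact max_eq_left hc2
          rw [hcval, if_pos hlt, he0, if_neg (not_le.2 hh)]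
          linarith
        · have hcval : c n ω = 0 := by simp only [hc]; simp [hc2]
          have hind : (if h ≤ GS (n+1) ω then (1:ℝ) else 0) ≤ 1 := by split <;> norm_num
          have hind2 : (0:ℝ) ≤ if h ≤ GS (n+1) ω then (1:ℝ) else 0 := by split <;> norm_num
          rw [hcval, if_pos hlt]
          linarith
  -- lower bound pointwise
  have hlow : ∀ n ω, Real.exp (r*h) * (if h ≤ GS n ω then (1:ℝ) else 0)
      + (if GS n ω < h then (1:ℝ) else 0) ≤ M n ω := by
    intro n ω
    by_cases hc1 : h ≤ GS n ω
    · rw [if_pos hc1, if_neg (not_lt.2 hc1)]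
      simp only [hM, mul_one, add_zero]
      exact Real.exp_le_exp.2 (by nlinarith)
    · rw [if_neg hc1, if_pos (lt_of_not_ge hc1)]
      simp only [hM, mul_zero, zero_add]
      calc (1:ℝ) = Real.exp 0 := Real.exp_zero.symm
        _ ≤ Real.exp (r * GS n ω) := Real.exp_le_exp.2 (by nlinarith [hGSnn n ω])
  -- indicator integrals
  have hindQ : ∀ n, ∫ ω, (if GS n ω < h then (1:ℝ) else 0) ∂μ = q n := by
    intro n
    have hfe : (fun ω => if GS n ω < h then (1:ℝ) else 0)
        = Set.indicator ((A n)ᶜ) (fun _ => (1:ℝ)) := by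
      funext ω
      rw [Set.indicator_apply]
      by_cases hx : GS n ω < h
      · rw [if_pos hx, if_pos (by rw [hAc n]; exact hx)]
      · rw [if_neg hx, if_neg (by rw [hAc n]; exact hx)]
    rw [hfe, integral_indicator_const (1:ℝ) (hAmeas n).compl]
    simp [hq, measureReal_def]
  have hindP : ∀ n, ∫ ω, (if h ≤ GS n ω then (1:ℝ) else 0) ∂μ = p n := by
    intro n
    have hfe : (fun ω => if h ≤ GS n ω then (1:ℝ) else 0)
        = Set.indicator (A n) (fun _ => (1:ℝ)) := by
      funext ω
      rw [Set.indicator_apply]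
      by_cases hx : h ≤ GS n ω
      · rw [if_pos hx, if_pos (show ω ∈ A n from hx)]
      · rw [if_neg hx, if_neg (show ω ∉ A n from hx)]
    rw [hfe, integral_indicator_const (1:ℝ) (hAmeas n)]
    simp [hp, measureReal_def]
  have hindQint : ∀ n, Integrable (fun ω => if GS n ω < h then (1:ℝ) else 0) μ := by
    intro n
    refine (integrable_const (1:ℝ)).mono'
      (Measurable.ite (measurableSet_lt (hGSmeas n) measurable_const)
        measurable_const measurable_const).aestronglyMeasurable ?_
    refine Filter.Eventually.of_forall fun ω => ?_
    split <;> simp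
  have hindPint : ∀ n, Integrable (fun ω => if h ≤ GS n ω then (1:ℝ) else 0) μ := by
    intro n
    refine (integrable_const (1:ℝ)).mono'
      (Measurable.ite (measurableSet_le measurable_const (hGSmeas n))
        measurable_const measurable_const).aestronglyMeasurable ?_
    refine Filter.Eventually.of_forall fun ω => ?_
    split <;> simp
  -- the main real inequality: exp(rh) * p n ≤ ∑_{k<n} q k
  have hmain : ∀ n, Real.exp (r*h) * p n ≤ ∑ k ∈ Finset.range n, q k := by
    intro n
    -- integrate hlow
    have hl : Real.exp (r*h) * p n + q n ≤ ∫ ω, M n ω ∂μ := by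
      have h0 : ∫ ω, (Real.exp (r*h) * (if h ≤ GS n ω then (1:ℝ) else 0)
          + (if GS n ω < h then (1:ℝ) else 0)) ∂μ ≤ ∫ ω, M n ω ∂μ :=
        integral_mono (((hindPint n).const_mul (Real.exp (r*h))).add (hindQint n))
          (hMint n) (hlow n)
      have e1 : ∫ ω, (Real.exp (r*h) * (if h ≤ GS n ω then (1:ℝ) else 0)
          + (if GS n ω < h then (1:ℝ) else 0)) ∂μ
          = ∫ ω, (Real.exp (r*h) * (if h ≤ GS n ω then (1:ℝ) else 0)) ∂μ
            + ∫ ω, (if GS n ω < h then (1:ℝ) else 0) ∂μ :=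
        integral_add ((hindPint n).const_mul _) (hindQint n)
      have e2 : ∫ ω, (Real.exp (r*h) * (if h ≤ GS n ω then (1:ℝ) else 0)) ∂μ
          = Real.exp (r*h) * ∫ ω, (if h ≤ GS n ω then (1:ℝ) else 0) ∂μ :=
        integral_const_mul _ _
      rw [e1, e2, hindP n, hindQ n] at h0
      exact h0
    -- integrate hcount
    have hcsum : ∑ k ∈ Finset.range n, ∫ ω, c k ω ∂μ ≤
        (∑ k ∈ Finset.range n, q k) - p n := by
      have hint1 : Integrable (fun ω => ∑ k ∈ Finset.range n, c k ω) μ :=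
        integrable_finset_sum _ fun k _ => hcint k
      have hint2 : Integrable (fun ω =>
          (∑ k ∈ Finset.range n, (if GS k ω < h then (1:ℝ) else 0))
            - (if h ≤ GS n ω then (1:ℝ) else 0)) μ :=
        (integrable_finset_sum _ fun k _ => hindQint k).sub (hindPint n)
      have h0 : ∫ ω, (∑ k ∈ Finset.range n, c k ω) ∂μ ≤
          ∫ ω, ((∑ k ∈ Finset.range n, (if GS k ω < h then (1:ℝ) else 0))
            - (if h ≤ GS n ω then (1:ℝ) else 0)) ∂μ :=
        integral_mono hint1 hint2 (fun ω => hcount n ω)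
      have e1 : ∫ ω, (∑ k ∈ Finset.range n, c k ω) ∂μ
          = ∑ k ∈ Finset.range n, ∫ ω, c k ω ∂μ :=
        integral_finset_sum _ (fun k _ => hcint k)
      have e2 : ∫ ω, ((∑ k ∈ Finset.range n, (if GS k ω < h then (1:ℝ) else 0))
            - (if h ≤ GS n ω then (1:ℝ) else 0)) ∂μ
          = ∫ ω, (∑ k ∈ Finset.range n, (if GS k ω < h then (1:ℝ) else 0)) ∂μ
            - ∫ ω, (if h ≤ GS n ω then (1:ℝ) else 0) ∂μ :=
        integral_sub (integrable_finset_sum _ fun k _ => hindQint k) (hindPint n)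
      have e3 : ∫ ω, (∑ k ∈ Finset.range n, (if GS k ω < h then (1:ℝ) else 0)) ∂μ
          = ∑ k ∈ Finset.range n, ∫ ω, (if GS k ω < h then (1:ℝ) else 0) ∂μ :=
        integral_finset_sum _ (fun k _ => hindQint k)
      have e4 : ∑ k ∈ Finset.range n, ∫ ω, (if GS k ω < h then (1:ℝ) else 0) ∂μ
          = ∑ k ∈ Finset.range n, q k :=
        Finset.sum_congr rfl fun k _ => hindQ k
      rw [e1, e2, e3, e4, hindP n] at h0
      exact h0
    have h2 := hMsum n
    have h3 := hpq n
    linarith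
  -- from reals to ENNReal: ofReal (exp(rh) * p n) ≤ lintegral of T
  set T : Ω → ℝ≥0∞ := fun ω => oneSidedAlarm h (fun k => s k ω) with hT
  have hsumT : ∀ n ω, ∑ k ∈ Finset.range n,
      ((A k)ᶜ.indicator (fun _ => (1:ℝ≥0∞)) ω) ≤ T ω := by
    intro n ω
    induction n with
    | zero => simp
    | succ n ih =>
      rw [Finset.sum_range_succ]
      by_cases hc1 : h ≤ GS n ω
      · have : (A n)ᶜ.indicator (fun _ => (1:ℝ≥0∞)) ω = 0 := by
          rw [Set.indicator_apply_eq_zero]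
          intro hmem
          exact absurd hc1 (by simpa [hA] using hmem)
        rw [this, add_zero]
        exact ih
      · have hlt : GS n ω < h := lt_of_not_ge hc1
        have hall : ∀ k, k ≤ n → GS k ω < h := by
          intro k hk
          by_contra hc
          exact hc1 (gStop_freeze h _ hk (not_lt.1 hc))
        have hone : ∀ k ∈ Finset.range (n+1),
            ((A k)ᶜ.indicator (fun _ => (1:ℝ≥0∞)) ω) = 1 := by
          intro k hk
          have : ω ∈ (A k)ᶜ := by
            rw [hAc k]
            exact hall k (Nat.lt_succ_iff.1 (Finset.mem_range.1 hk))
          simp [Set.indicator_of_mem this]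
        have hsum : (∑ k ∈ Finset.range n, ((A k)ᶜ.indicator (fun _ => (1:ℝ≥0∞)) ω))
            + (A n)ᶜ.indicator (fun _ => (1:ℝ≥0∞)) ω = (n : ℝ≥0∞) + 1 := by
          rw [← Finset.sum_range_succ]
          rw [Finset.sum_congr rfl hone]
          simp
        rw [hsum]
        exact alarm_lower h _ hlt
  have hTlow : ∀ n, ENNReal.ofReal (Real.exp (r*h) * p n) ≤ ∫⁻ ω, T ω ∂μ := by
    intro n
    have h1 : ENNReal.ofReal (Real.exp (r*h) * p n) ≤
        ENNReal.ofReal (∑ k ∈ Finset.range n, q k) :=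
      ENNReal.ofReal_le_ofReal (hmain n)
    have h2 : ENNReal.ofReal (∑ k ∈ Finset.range n, q k)
        = ∑ k ∈ Finset.range n, μ (A k)ᶜ := by
      rw [ENNReal.ofReal_sum_of_nonneg (fun k _ => ENNReal.toReal_nonneg)]
      exact Finset.sum_congr rfl fun k _ => ENNReal.ofReal_toReal (measure_ne_top _ _)
    have h3 : ∑ k ∈ Finset.range n, μ (A k)ᶜ
        = ∫⁻ ω, ∑ k ∈ Finset.range n, ((A k)ᶜ.indicator (fun _ => (1:ℝ≥0∞)) ω) ∂μ := by
      rw [lintegral_finset_sum _ (fun k _ =>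
        (measurable_const.indicator (hAmeas k).compl))]
      refine Finset.sum_congr rfl fun k _ => ?_
      rw [lintegral_indicator ((hAmeas k).compl), setLIntegral_one]
    have h4 : ∫⁻ ω, ∑ k ∈ Finset.range n, ((A k)ᶜ.indicator (fun _ => (1:ℝ≥0∞)) ω) ∂μ
        ≤ ∫⁻ ω, T ω ∂μ := lintegral_mono fun ω => hsumT n ω
    exact le_trans h1 (le_trans h2.le (le_trans h3.le h4))
  -- conclude by a dichotomy
  set E : Set Ω := ⋂ n, (A n)ᶜ with hE
  have hEmeas : MeasurableSet E := MeasurableSet.iInter fun n => (hAmeas n).compl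
  by_cases hEzero : μ E = 0
  · -- p n → 1
    have hUnion : (⋃ n, A n) = Eᶜ := by
      rw [hE, Set.compl_iInter]
      simp
    have htend : Filter.Tendsto (fun n => μ (A n)) Filter.atTop (nhds (μ (⋃ n, A n))) :=
      tendsto_measure_iUnion_atTop hAmono
    have hUval : μ (⋃ n, A n) = 1 := by
      rw [hUnion, prob_compl_eq_one_sub hEmeas, hEzero]
      simp
    rw [hUval] at htend
    have hptend : Filter.Tendsto p Filter.atTop (nhds 1) := by
      have := (ENNReal.tendsto_toReal (by norm_num : (1:ℝ≥0∞) ≠ ⊤)).comp htend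
      simpa [hp, Function.comp_def] using this
    have hftend : Filter.Tendsto (fun n => ENNReal.ofReal (Real.exp (r*h) * p n))
        Filter.atTop (nhds (ENNReal.ofReal (Real.exp (r*h)))) := by
      have h1 : Filter.Tendsto (fun n => Real.exp (r*h) * p n) Filter.atTop
          (nhds (Real.exp (r*h))) := by
        simpa using hptend.const_mul (Real.exp (r*h))
      exact (ENNReal.continuous_ofReal.tendsto _).comp h1
    have : ENNReal.ofReal (Real.exp (r*h)) ≤ ∫⁻ ω, T ω ∂μ :=
      le_of_tendsto hftend (Filter.Eventually.of_forall hTlow)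
    simpa [hT, mul_comm] using this
  · -- T = ∞ on E, which has positive measure
    have hTinf : ∀ ω ∈ E, T ω = ⊤ := by
      intro ω hω
      refine alarm_infinite h _ fun n => ?_
      have := Set.mem_iInter.1 hω n
      rw [hAc n] at this
      exact this
    have h1 : ∫⁻ ω, E.indicator (fun _ => (⊤:ℝ≥0∞)) ω ∂μ ≤ ∫⁻ ω, T ω ∂μ := by
      refine lintegral_mono fun ω => ?_
      by_cases hω : ω ∈ E
      · rw [Set.indicator_of_mem hω, hTinf ω hω]
      · rw [Set.indicator_of_notMem hω]
        exact zero_le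
    have h2 : ∫⁻ ω, E.indicator (fun _ => (⊤:ℝ≥0∞)) ω ∂μ = ⊤ := by
      rw [lintegral_indicator hEmeas, setLIntegral_const]
      exact ENNReal.top_mul hEzero
    rw [h2] at h1
    have : ∫⁻ ω, T ω ∂μ = ⊤ := top_le_iff.1 h1
    simpa [hT, mul_comm] using le_top.trans_eq this.symm
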